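/- Let n ∈ ℕ and let Δ : MvPolynomial (Fin n) ℝ → MvPolynomial (Fin n) ℝ be the polynomial Laplacian Δp = ∑_{i} ∂ᵢ(∂ᵢ p). Let y₁, …, y_{2d} ∈ ℝⁿ and let p = ∏_{i=1}^{2d} (⟨yᵢ⟩) where ⟨yᵢ⟩ denotes the linear polynomial ∑_j (yᵢ)_j X_j. Then Δ^d p is the constant polynomial ∑_{σ} ∏_{k=1}^{d} ⟨y_{σ(2k−1)}, y_{σ(2k)}⟩, where the sum runs over all permutations σ of {1,…,2d} and ⟨·,·⟩ is the standard inner product on ℝⁿ. -/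

import Mathlib

open MvPolynomial Finset

noncomputable section WickAux

variable {n m : ℕ}

def linF (v : Fin n → ℝ) : MvPolynomial (Fin n) ℝ := ∑ j, C (v j) * X j

def ip (a b : Fin n → ℝ) : ℝ := ∑ j, a j * b j

def lap (n : ℕ) (q : MvPolynomial (Fin n) ℝ) : MvPolynomial (Fin n) ℝ :=
  ∑ i, pderiv i (pderiv i q)

lemma pderiv_linF (i : Fin n) (v : Fin n → ℝ) : pderiv i (linF v) = C (v i) := by
  unfold linF
  rw [map_sum]
  rw [Finset.sum_eq_single i]
  · simp
  · intro b _ hb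
    simp [pderiv_C_mul, pderiv_X_of_ne hb]
  · simp

lemma lap_sum {α : Type*} (t : Finset α) (F : α → MvPolynomial (Fin n) ℝ) :
    lap n (∑ x ∈ t, F x) = ∑ x ∈ t, lap n (F x) := by
  unfold lap
  simp_rw [map_sum]
  exact Finset.sum_comm

lemma lap_C_mul (c : ℝ) (q : MvPolynomial (Fin n) ℝ) :
    lap n (C c * q) = C c * lap n q := by
  unfold lap
  simp_rw [pderiv_C_mul, Finset.mul_sum]

lemma lap_iter_sum {α : Type*} (e : ℕ) (t : Finset α) (c : α → ℝ)
    (F : α → MvPolynomial (Fin n) ℝ) :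
    (lap n)^[e] (∑ x ∈ t, C (c x) * F x) = ∑ x ∈ t, C (c x) * (lap n)^[e] (F x) := by
  induction e generalizing F with
  | zero => simp
  | succ e ih =>
    rw [Function.iterate_succ_apply, lap_sum]
    simp_rw [lap_C_mul]
    rw [ih]
    simp_rw [Function.iterate_succ_apply]

lemma pderiv_prod_linF (i : Fin n) (y : Fin m → Fin n → ℝ) (s : Finset (Fin m)) :
    pderiv i (∏ k ∈ s, linF (y k)) = ∑ k ∈ s, C (y k i) * ∏ l ∈ s.erase k, linF (y l) := by
  classical
  induction s using Finset.induction_on with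
  | empty => simp [pderiv_one]
  | @insert a s ha ih =>
    rw [Finset.prod_insert ha, pderiv_mul, ih, Finset.sum_insert ha,
      Finset.erase_insert ha, pderiv_linF]
    rw [Finset.mul_sum]
    congr 1
    refine Finset.sum_congr rfl fun k hk => ?_
    rw [Finset.erase_insert_of_ne (by rintro rfl; exact ha hk),
      Finset.prod_insert (fun h => ha (Finset.mem_of_mem_erase h))]
    ring

def Gg (y : Fin m → Fin n → ℝ) : ℕ → Finset (Fin m) → ℝ
  | 0, _ => 1
  | e+1, s => ∑ i ∈ s, ∑ j ∈ s.erase i, ip (y i) (y j) * Gg y e ((s.erase i).erase j)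

lemma lap_prod_linF (y : Fin m → Fin n → ℝ) (s : Finset (Fin m)) :
    lap n (∏ k ∈ s, linF (y k)) =
      ∑ i ∈ s, ∑ j ∈ s.erase i, C (ip (y i) (y j)) * ∏ l ∈ (s.erase i).erase j, linF (y l) := by
  unfold lap
  simp_rw [pderiv_prod_linF, map_sum, pderiv_C_mul, pderiv_prod_linF, Finset.mul_sum]
  rw [Finset.sum_comm]
  refine Finset.sum_congr rfl fun i hi => ?_
  rw [Finset.sum_comm]
  refine Finset.sum_congr rfl fun j hj => ?_
  rw [ip, map_sum, Finset.sum_mul]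
  refine Finset.sum_congr rfl fun a _ => ?_
  rw [map_mul]
  ring

lemma lemA (y : Fin m → Fin n → ℝ) : ∀ (e : ℕ) (s : Finset (Fin m)), s.card = 2*e →
    (lap n)^[e] (∏ k ∈ s, linF (y k)) = C (Gg y e s) := by
  intro e
  induction e with
  | zero =>
    intro s hs
    rw [Nat.mul_zero, Finset.card_eq_zero] at hs
    subst hs
    simp [Gg]
  | succ e ih =>
    intro s hs
    rw [Function.iterate_succ_apply, lap_prod_linF]
    rw [Finset.sum_sigma']
    rw [lap_iter_sum]
    have h1 : ∀ x ∈ s.sigma s.erase,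
        C (ip (y x.fst) (y x.snd)) * (lap n)^[e] (∏ l ∈ (s.erase x.fst).erase x.snd, linF (y l))
        = C (ip (y x.fst) (y x.snd) * Gg y e ((s.erase x.fst).erase x.snd)) := by
      intro x hx
      rw [Finset.mem_sigma] at hx
      rw [ih _ ?_, ← map_mul]
      rw [Finset.card_erase_of_mem hx.2, Finset.card_erase_of_mem hx.1, hs]
      omega
    rw [Finset.sum_congr rfl h1, ← map_sum]
    congr 1
    rw [Gg, Finset.sum_sigma']
def Bb (y : Fin m → Fin n → ℝ) (e : ℕ) (s : Finset (Fin m)) : ℝ :=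
  ∑ f : Fin (2*e) → Fin m,
    if Function.Injective f ∧ ∀ k, f k ∈ s then
      ∏ k : Fin e, ip (y (f ⟨2*(k:ℕ), (by omega : 2*(k:ℕ) < 2*e+0)⟩)) (y (f ⟨2*(k:ℕ)+1, (by omega : 2*(k:ℕ)+1 < 2*e+0)⟩))
    else 0

def assemble (α : Type*) (e : ℕ) (i j : α) (g : Fin (2*e) → α) : Fin (2*(e+1)) → α :=
  fun k => if _ : (k:ℕ) = 0 then i else if _ : (k:ℕ) = 1 then j
    else g ⟨(k:ℕ)-2, by omega⟩

lemma assemble_of_val_zero {α : Type*} {e : ℕ} {i j : α} {g : Fin (2*e) → α}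
    {k : Fin (2*(e+1))} (hk : (k:ℕ) = 0) : assemble α e i j g k = i := by
  unfold assemble; rw [dif_pos hk]

lemma assemble_of_val_one {α : Type*} {e : ℕ} {i j : α} {g : Fin (2*e) → α}
    {k : Fin (2*(e+1))} (hk : (k:ℕ) = 1) : assemble α e i j g k = j := by
  unfold assemble; rw [dif_neg (by omega), dif_pos hk]

lemma assemble_of_val_add_two {α : Type*} {e : ℕ} {i j : α} {g : Fin (2*e) → α}
    {k : Fin (2*(e+1))} {k' : ℕ} (hk : (k:ℕ) = k' + 2) (hk' : k' < 2*e) :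
    assemble α e i j g k = g ⟨k', hk'⟩ := by
  unfold assemble
  rw [dif_neg (by omega), dif_neg (by omega)]
  congr 1
  exact Fin.ext (by simp [hk])

def splitEquiv (α : Type*) (e : ℕ) : (Fin (2*(e+1)) → α) ≃ α × α × (Fin (2*e) → α) where
  toFun f := (f ⟨0, by omega⟩, f ⟨1, by omega⟩, fun k => f ⟨(k:ℕ)+2, by omega⟩)
  invFun x := assemble α e x.1 x.2.1 x.2.2
  left_inv f := by
    funext k
    rcases k with ⟨k, hk⟩
    by_cases h0 : k = 0
    · subst h0; exact assemble_of_val_zero rfl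
    by_cases h1 : k = 1
    · subst h1; exact assemble_of_val_one rfl
    refine ((assemble_of_val_add_two (k' := k - 2) (by simp; omega) (by omega)).trans ?_)
    exact congrArg f (Fin.ext (by simp; omega))
  right_inv := by
    rintro ⟨i, j, g⟩
    dsimp
    refine Prod.ext ?_ (Prod.ext ?_ ?_)
    · show assemble α e i j g ⟨0, by omega⟩ = i
      exact assemble_of_val_zero rfl
    · show assemble α e i j g ⟨1, by omega⟩ = j
      exact assemble_of_val_one rfl
    · show (fun k : Fin (2*e) => assemble α e i j g ⟨(k:ℕ)+2, by omega⟩) = g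
      funext k
      exact (assemble_of_val_add_two rfl k.isLt).trans (congrArg g (Fin.ext rfl))

lemma assemble_key {e : ℕ} (i j : Fin m) (g : Fin (2*e) → Fin m) (a : Fin (2*(e+1))) :
    ((a:ℕ) = 0 ∧ assemble (Fin m) e i j g a = i) ∨
    ((a:ℕ) = 1 ∧ assemble (Fin m) e i j g a = j) ∨
    (∃ kk : Fin (2*e), (a:ℕ) = (kk:ℕ)+2 ∧ assemble (Fin m) e i j g a = g kk) := by
  by_cases h0 : (a:ℕ) = 0
  · exact Or.inl ⟨h0, assemble_of_val_zero h0⟩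
  by_cases h1 : (a:ℕ) = 1
  · exact Or.inr (Or.inl ⟨h1, assemble_of_val_one h1⟩)
  · exact Or.inr (Or.inr ⟨⟨(a:ℕ)-2, by omega⟩, by show (a:ℕ) = (a:ℕ)-2+2; omega,
      assemble_of_val_add_two (k' := (a:ℕ)-2) (by omega) (by omega)⟩)

lemma assemble_cond {e : ℕ} (s : Finset (Fin m)) (i j : Fin m) (g : Fin (2*e) → Fin m) :
    (Function.Injective (assemble (Fin m) e i j g) ∧ ∀ k, assemble (Fin m) e i j g k ∈ s)
    ↔ ((i ∈ s ∧ j ∈ s.erase i) ∧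
        (Function.Injective g ∧ ∀ k, g k ∈ (s.erase i).erase j)) := by
  have e0 : assemble (Fin m) e i j g ⟨0, by omega⟩ = i := assemble_of_val_zero rfl
  have e1 : assemble (Fin m) e i j g ⟨1, by omega⟩ = j := assemble_of_val_one rfl
  have e2 : ∀ k : Fin (2*e), assemble (Fin m) e i j g ⟨(k:ℕ)+2, by omega⟩ = g k :=
    fun k => (assemble_of_val_add_two rfl k.isLt).trans (congrArg g (Fin.ext rfl))
  constructor
  · rintro ⟨hinj, hmem⟩
    have hij : i ≠ j := by
      intro h
      have := hinj (a₁ := ⟨0, by omega⟩) (a₂ := ⟨1, by omega⟩) (by rw [e0, e1, h])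
      have := congrArg Fin.val this
      simp at this
    have hgi : ∀ k, g k ≠ i := by
      intro k h
      have := hinj (a₁ := ⟨(k:ℕ)+2, by omega⟩) (a₂ := ⟨0, by omega⟩) (by rw [e0, e2, h])
      have := congrArg Fin.val this
      simp at this
    have hgj : ∀ k, g k ≠ j := by
      intro k h
      have := hinj (a₁ := ⟨(k:ℕ)+2, by omega⟩) (a₂ := ⟨1, by omega⟩) (by rw [e1, e2, h])
      have := congrArg Fin.val this
      simp at this
    refine ⟨⟨e0 ▸ hmem _, Finset.mem_erase.2 ⟨fun h => hij h.symm, e1 ▸ hmem _⟩⟩,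
      ?_, fun k => Finset.mem_erase.2 ⟨hgj k, Finset.mem_erase.2 ⟨hgi k, e2 k ▸ hmem _⟩⟩⟩
    intro a b hab
    have := hinj (a₁ := ⟨(a:ℕ)+2, by omega⟩) (a₂ := ⟨(b:ℕ)+2, by omega⟩)
      (by rw [e2, e2, hab])
    have := congrArg Fin.val this
    simp at this
    exact Fin.ext this
  · rintro ⟨⟨hi, hj⟩, hginj, hg⟩
    have hji : j ≠ i := (Finset.mem_erase.1 hj).1
    have hjs : j ∈ s := (Finset.mem_erase.1 hj).2
    have hg' : ∀ k, g k ≠ j ∧ g k ≠ i ∧ g k ∈ s := by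
      intro k
      have h1 := Finset.mem_erase.1 (hg k)
      have h2 := Finset.mem_erase.1 h1.2
      exact ⟨h1.1, h2.1, h2.2⟩
    constructor
    · intro a b hab
      rcases assemble_key i j g a with ⟨ha, va⟩ | ⟨ha, va⟩ | ⟨ka, hka, va⟩ <;>
        rcases assemble_key i j g b with ⟨hb, vb⟩ | ⟨hb, vb⟩ | ⟨kb, hkb, vb⟩
      · exact Fin.ext (by omega)
      · rw [va, vb] at hab; exact absurd hab.symm hji
      · rw [va, vb] at hab; exact absurd hab.symm (hg' kb).2.1
      · rw [va, vb] at hab; exact absurd hab hji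
      · exact Fin.ext (by omega)
      · rw [va, vb] at hab; exact absurd hab.symm (hg' kb).1
      · rw [va, vb] at hab; exact absurd hab (hg' ka).2.1
      · rw [va, vb] at hab; exact absurd hab (hg' ka).1
      · rw [va, vb] at hab
        have : ka = kb := hginj hab
        exact Fin.ext (by omega)
    · intro k
      rcases assemble_key i j g k with ⟨hk, vk⟩ | ⟨hk, vk⟩ | ⟨kk, hkk, vk⟩
      · rw [vk]; exact hi
      · rw [vk]; exact hjs
      · rw [vk]; exact (hg' kk).2.2
lemma assemble_prod {e : ℕ} (y : Fin m → Fin n → ℝ) (i j : Fin m) (g : Fin (2*e) → Fin m) :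
    (∏ k : Fin (e+1), ip (y (assemble (Fin m) e i j g ⟨2*(k:ℕ), by omega⟩))
        (y (assemble (Fin m) e i j g ⟨2*(k:ℕ)+1, by omega⟩)))
    = ip (y i) (y j) * ∏ k : Fin e, ip (y (g ⟨2*(k:ℕ), (by omega : 2*(k:ℕ) < 2*e+0)⟩)) (y (g ⟨2*(k:ℕ)+1, (by omega : 2*(k:ℕ)+1 < 2*e+0)⟩)) := by
  rw [Fin.prod_univ_succ,
      assemble_of_val_zero (show 2*((0:Fin (e+1)):ℕ) = 0 by simp),
      assemble_of_val_one (show (2*((0:Fin (e+1)):ℕ)+1 : ℕ) = 1 by simp)]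
  congr 1

lemma Bb_succ (y : Fin m → Fin n → ℝ) (e : ℕ) (s : Finset (Fin m)) :
    Bb y (e+1) s = ∑ i ∈ s, ∑ j ∈ s.erase i, ip (y i) (y j) * Bb y e ((s.erase i).erase j) := by
  rw [Bb, ← Equiv.sum_comp (splitEquiv (Fin m) e).symm]
  rw [Fintype.sum_prod_type]
  have step : ∀ x : Fin m × Fin m × (Fin (2*e) → Fin m),
      (splitEquiv (Fin m) e).symm x = assemble (Fin m) e x.1 x.2.1 x.2.2 := fun _ => rfl
  simp only [step, Fintype.sum_prod_type]
  have inner : ∀ i j : Fin m,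
      (∑ g : Fin (2*e) → Fin m,
        if Function.Injective (assemble (Fin m) e i j g) ∧
            (∀ k, assemble (Fin m) e i j g k ∈ s) then
          ∏ k : Fin (e+1), ip (y (assemble (Fin m) e i j g ⟨2*(k:ℕ), by omega⟩))
            (y (assemble (Fin m) e i j g ⟨2*(k:ℕ)+1, by omega⟩))
        else 0)
      = if i ∈ s ∧ j ∈ s.erase i then
          ip (y i) (y j) * Bb y e ((s.erase i).erase j) else 0 := by
    intro i j
    by_cases hij : i ∈ s ∧ j ∈ s.erase i
    · rw [if_pos hij, Bb, Finset.mul_sum]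
      refine Finset.sum_congr rfl fun g _ => ?_
      rw [mul_ite, mul_zero]
      by_cases hg : Function.Injective g ∧ ∀ k, g k ∈ (s.erase i).erase j
      · rw [if_pos ((assemble_cond s i j g).2 ⟨hij, hg⟩), if_pos hg, assemble_prod]
      · rw [if_neg (fun hc => hg ((assemble_cond s i j g).1 hc).2), if_neg hg]
    · rw [if_neg hij]
      refine Finset.sum_eq_zero fun g _ => ?_
      exact if_neg (fun hc => hij ((assemble_cond s i j g).1 hc).1)
  calc (∑ i : Fin m, ∑ j : Fin m, ∑ g : Fin (2*e) → Fin m,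
          if Function.Injective (assemble (Fin m) e i j g) ∧
              (∀ k, assemble (Fin m) e i j g k ∈ s) then
            ∏ k : Fin (e+1), ip (y (assemble (Fin m) e i j g ⟨2*(k:ℕ), by omega⟩))
              (y (assemble (Fin m) e i j g ⟨2*(k:ℕ)+1, by omega⟩))
          else 0)
      = ∑ i : Fin m, ∑ j : Fin m, (if i ∈ s ∧ j ∈ s.erase i then
          ip (y i) (y j) * Bb y e ((s.erase i).erase j) else 0) := by
        refine Finset.sum_congr rfl fun i _ => Finset.sum_congr rfl fun j _ => inner i j
    _ = ∑ i : Fin m, (if i ∈ s then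
          ∑ j ∈ s.erase i, ip (y i) (y j) * Bb y e ((s.erase i).erase j) else 0) := by
        refine Finset.sum_congr rfl fun i _ => ?_
        by_cases hi : i ∈ s
        · simp only [hi, true_and, if_pos]
          rw [Fintype.sum_ite_mem]
        · simp [hi]
    _ = ∑ i ∈ s, ∑ j ∈ s.erase i, ip (y i) (y j) * Bb y e ((s.erase i).erase j) := by
        rw [Fintype.sum_ite_mem]
lemma Bb_zero (y : Fin m → Fin n → ℝ) (s : Finset (Fin m)) : Bb y 0 s = 1 := by
  rw [Bb]
  have hc : ∀ f : Fin (2*0) → Fin m, Function.Injective f ∧ ∀ k, f k ∈ s :=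
    fun f => ⟨fun a _ _ => (Nat.not_lt_zero _ a.isLt).elim,
      fun k => (Nat.not_lt_zero _ k.isLt).elim⟩
  rw [Finset.sum_congr rfl fun f _ => if_pos (hc f)]
  have : ∀ f : Fin (2*0) → Fin m,
      (∏ k : Fin 0, ip (y (f ⟨2*(k:ℕ), by omega⟩)) (y (f ⟨2*(k:ℕ)+1, by omega⟩))) = 1 :=
    fun f => Finset.prod_of_isEmpty _
  rw [Finset.sum_congr rfl fun f _ => this f, Finset.sum_const, Finset.card_univ]
  have : Fintype.card (Fin (2*0) → Fin m) = 1 := by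
    rw [Fintype.card_fun]
    simp
  rw [this]
  simp

lemma lemB (y : Fin m → Fin n → ℝ) : ∀ (e : ℕ) (s : Finset (Fin m)), Gg y e s = Bb y e s := by
  intro e
  induction e with
  | zero => intro s; rw [Bb_zero]; rfl
  | succ e ih =>
    intro s
    rw [Bb_succ, Gg]
    exact Finset.sum_congr rfl fun i _ => Finset.sum_congr rfl fun j _ => by rw [ih]

lemma Bb_univ_perm (d : ℕ) (y : Fin (2*d) → Fin n → ℝ) :
    Bb y d (Finset.univ : Finset (Fin (2*d)))
      = ∑ σ : Equiv.Perm (Fin (2*d)), ∏ k : Fin d,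
          ip (y (σ ⟨2*(k:ℕ), (by omega : 2*(k:ℕ) < 2*d+0)⟩)) (y (σ ⟨2*(k:ℕ)+1, (by omega : 2*(k:ℕ)+1 < 2*d+0)⟩)) := by
  rw [Bb, ← Finset.sum_filter]
  refine (Finset.sum_bij (fun (σ : Equiv.Perm (Fin (2*d))) _ => ⇑σ) ?_ ?_ ?_ ?_).symm
  · intro σ _
    exact Finset.mem_filter.2 ⟨Finset.mem_univ _, σ.injective, fun k => Finset.mem_univ _⟩
  · intro σ1 _ σ2 _ h
    exact Equiv.coe_fn_injective h
  · intro f hf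
    refine ⟨Equiv.ofBijective f ((Fintype.bijective_iff_injective_and_card f).2
      ⟨(Finset.mem_filter.1 hf).2.1, rfl⟩), Finset.mem_univ _, rfl⟩
  · intro σ _
    rfl
end WickAux


/-- Wick pairing formula: the `d`-th power of the polynomial Laplacian applied to a
product of `2d` linear forms is the constant given by the sum over all permutations
`σ` of `{1,…,2d}` of the products of the inner products of consecutively paired forms. -/
theorem laplacian_pow_product_linear_forms
    (n d : ℕ) (Δ : MvPolynomial (Fin n) ℝ → MvPolynomial (Fin n) ℝ)
    (hΔ : ∀ q : MvPolynomial (Fin n) ℝ, Δ q = ∑ i : Fin n, pderiv i (pderiv i q))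
    (y : Fin (2 * d) → (Fin n → ℝ)) :
    Δ^[d] (∏ i : Fin (2 * d), (∑ j : Fin n, C (y i j) * X j))
      = C (∑ σ : Equiv.Perm (Fin (2 * d)), ∏ k : Fin d,
          ∑ j : Fin n, y (σ ⟨2 * (k : ℕ), by omega⟩) j * y (σ ⟨2 * (k : ℕ) + 1, by omega⟩) j) := by
  have hΔ' : Δ = lap n := funext hΔ
  subst hΔ'
  have h1 : (∏ i : Fin (2 * d), (∑ j : Fin n, C (y i j) * X j))
      = ∏ i ∈ (Finset.univ : Finset (Fin (2*d))), linF (y i) := rfl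
  rw [h1, lemA y d Finset.univ (by simp), lemB, Bb_univ_perm]
  rfl
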